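/- arXiv:cond-mat/0702145 — 4 statements merged into one kernel-verified Lean document; each statement's English description precedes it below -/
import Mathlib

section
/- The GG model is critical in the following sense: there exists an initial set A₀ ⊆ ℤ² such that both A₀ and its complement ℤ² \ A₀ are infinite and ⟨A₀⟩ = ℤ². -/
open MeasureTheory Set

abbrev Site : Type := ℤ × ℤ
abbrev Config : Type := Site → Bool

def ggN : Set Site := {(1,0), (2,0), (-1,0), (-2,0), (0,1), (0,-1)}

def ggT (A : Set Site) : Set Site :=
  A ∪ {x : Site | 3 ≤ (((x + ·) '' ggN) ∩ A).ncard}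

def ggClosure (A : Set Site) : Set Site := ⋃ n : ℕ, ggT^[n] A

def ggTRes (V A : Set Site) : Set Site :=
  A ∪ {x : Site | x ∈ V ∧ 3 ≤ (((x + ·) '' ggN) ∩ A).ncard}

def ggClosureRes (V A : Set Site) : Set Site := ⋃ n : ℕ, (ggTRes V)^[n] A

def InternallySpanned (V A₀ : Set Site) : Prop :=
  ggClosureRes V (A₀ ∩ V) = V

def occupied (ω : Config) : Set Site := {x | ω x = true}

def IsBernoulli (p : ℝ) (μ : Measure Config) : Prop :=
  IsProbabilityMeasure μ ∧
  ProbabilityTheory.iIndepFun (fun (x : Site) (ω : Config) => ω x) μ ∧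
  ∀ x : Site, μ {ω | ω x = true} = ENNReal.ofReal p

theorem gg_critical :
    ∃ A₀ : Set Site, A₀.Infinite ∧ A₀ᶜ.Infinite ∧ ggClosure A₀ = Set.univ := by
  refine ⟨{p : Site | p.1 ≠ 0}, ?_, ?_, ?_⟩
  · apply Set.infinite_of_injective_forall_mem (f := fun n : ℤ => ((1 : ℤ), n))
    · intro a b h; simpa using congrArg Prod.snd h
    · intro n; simp
  · apply Set.infinite_of_injective_forall_mem (f := fun n : ℤ => ((0 : ℤ), n))
    · intro a b h; simpa using congrArg Prod.snd h
    · intro n; simp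
  · apply Set.eq_univ_of_forall
    intro x
    apply Set.mem_iUnion.mpr ⟨1, ?_⟩
    simp only [Function.iterate_one, ggT, Set.mem_union]
    by_cases hx : x.1 ≠ 0
    · exact Or.inl hx
    · push_neg at hx
      right
      have hfin : (((x + ·) '' ggN) ∩ {p : Site | p.1 ≠ 0}).Finite := by
        apply Set.Finite.inter_of_left
        apply Set.Finite.image
        unfold ggN
        exact ((((((Set.finite_singleton _).insert _).insert _).insert _).insert _).insert _)
      have hsub : ({x + (1,0), x + (2,0), x + (-1,0)} : Set Site) ⊆
          ((x + ·) '' ggN) ∩ {p : Site | p.1 ≠ 0} := by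
        intro p hp
        rcases hp with rfl | rfl | rfl
        · exact ⟨⟨(1,0), by simp [ggN], rfl⟩, by simp [Prod.ext_iff, hx]⟩
        · exact ⟨⟨(2,0), by simp [ggN], rfl⟩, by simp [Prod.ext_iff, hx]⟩
        · exact ⟨⟨(-1,0), by simp [ggN], rfl⟩, by simp [Prod.ext_iff, hx]⟩
      have h3 : ({x + (1,0), x + (2,0), x + (-1,0)} : Set Site).ncard = 3 := by
        apply Set.ncard_eq_three.mpr
        exact ⟨_, _, _, by simp [Prod.ext_iff], by simp [Prod.ext_iff],
          by simp [Prod.ext_iff], rfl⟩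
      calc (3 : ℕ) = _ := h3.symm
        _ ≤ _ := Set.ncard_le_ncard hsub hfin
end

section
/- Horizontal growth of the GG model from an occupied rectangle: let a ≤ b and c ≤ d be integers with b − a ≥ 1, let R = ([a,b] × [c,d]) ∩ ℤ², and suppose A ⊇ R. If there exists y ∈ [c,d] such that (b+1, y) ∈ A or (b+2, y) ∈ A, then the whole adjacent column segment {b+1} × ([c,d] ∩ ℤ) is contained in ⟨A⟩ (and symmetrically for growth in the Western direction). -/
open MeasureTheory Set

lemma ggN_finite : ggN.Finite := by
  unfold ggN
  exact ((((((Set.finite_singleton _).insert _).insert _).insert _).insert _).insert _)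

lemma ggStage_mono (A : Set Site) : Monotone (fun n => ggT^[n] A) :=
  monotone_nat_of_le_succ (fun n => by
    rw [Function.iterate_succ_apply']
    exact Set.subset_union_left)

lemma subset_ggClosure (A : Set Site) : A ⊆ ggClosure A :=
  Set.subset_iUnion (fun n => ggT^[n] A) 0

lemma closure_step (A : Set Site) (x u v w : Site)
    (hu : u ∈ ggN) (hv : v ∈ ggN) (hw : w ∈ ggN)
    (h1 : u ≠ v) (h2 : u ≠ w) (h3 : v ≠ w)
    (mu : x + u ∈ ggClosure A) (mv : x + v ∈ ggClosure A) (mw : x + w ∈ ggClosure A) :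
    x ∈ ggClosure A := by
  obtain ⟨n1, hn1⟩ := Set.mem_iUnion.1 mu
  obtain ⟨n2, hn2⟩ := Set.mem_iUnion.1 mv
  obtain ⟨n3, hn3⟩ := Set.mem_iUnion.1 mw
  set N := max n1 (max n2 n3) with hN
  have h1' : x + u ∈ ggT^[N] A := ggStage_mono A (le_max_left _ _) hn1
  have h2' : x + v ∈ ggT^[N] A :=
    ggStage_mono A (le_trans (le_max_left _ _) (le_max_right _ _)) hn2
  have h3' : x + w ∈ ggT^[N] A :=
    ggStage_mono A (le_trans (le_max_right _ _) (le_max_right _ _)) hn3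
  have key : x ∈ ggT^[N+1] A := by
    rw [Function.iterate_succ_apply']
    refine Or.inr ?_
    have hsub : ({x+u, x+v, x+w} : Set Site) ⊆ ((x + ·) '' ggN) ∩ ggT^[N] A := by
      intro z hz
      rcases hz with rfl | rfl | rfl
      · exact ⟨⟨u, hu, rfl⟩, h1'⟩
      · exact ⟨⟨v, hv, rfl⟩, h2'⟩
      · exact ⟨⟨w, hw, rfl⟩, h3'⟩
    have hfin : (((x + ·) '' ggN) ∩ ggT^[N] A).Finite :=
      (ggN_finite.image _).inter_of_left _
    have hcard : ({x+u, x+v, x+w} : Set Site).ncard = 3 := by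
      rw [Set.ncard_eq_three]
      exact ⟨x+u, x+v, x+w,
        fun h => h1 (add_left_cancel h),
        fun h => h2 (add_left_cancel h),
        fun h => h3 (add_left_cancel h), rfl⟩
    have := Set.ncard_le_ncard hsub hfin
    simpa [hcard] using this
  exact Set.mem_iUnion.2 ⟨N+1, key⟩

lemma mem_ggN_of_sign {σ : ℤ} (hσ : σ = 1 ∨ σ = -1) :
    ((σ, 0) : Site) ∈ ggN ∧ ((2*σ, 0) : Site) ∈ ggN ∧ ((-σ, 0) : Site) ∈ ggN := by
  rcases hσ with rfl | rfl <;> simp [ggN]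

lemma grow (A : Set Site) (e c d σ : ℤ) (hσ : σ = 1 ∨ σ = -1) (hcd : c ≤ d)
    (hside : ∀ y ∈ Set.Icc c d, ((e+σ, y) : Site) ∈ A ∧ ((e+2*σ, y) : Site) ∈ A)
    (hy : ∃ y ∈ Set.Icc c d, ((e, y) : Site) ∈ A ∨ ((e - σ, y) : Site) ∈ A) :
    ∀ y ∈ Set.Icc c d, ((e, y) : Site) ∈ ggClosure A := by
  have hσ0 : σ ≠ 0 := by rcases hσ with rfl | rfl <;> decide
  obtain ⟨hg1, hg2, hg3⟩ := mem_ggN_of_sign hσ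
  have hvert1 : ((0,1) : Site) ∈ ggN := by simp [ggN]
  have hvert2 : ((0,-1) : Site) ∈ ggN := by simp [ggN]
  obtain ⟨y₀, hy₀, hcase⟩ := hy
  have hnbr : ∀ y ∈ Set.Icc c d,
      ((e, y) : Site) + (σ, 0) ∈ ggClosure A ∧ ((e, y) : Site) + (2*σ, 0) ∈ ggClosure A := by
    intro y hyI
    obtain ⟨hs1, hs2⟩ := hside y hyI
    exact ⟨subset_ggClosure A (by simpa using hs1), subset_ggClosure A (by simpa using hs2)⟩
  have hd1 : ((σ, 0) : Site) ≠ (2*σ, 0) := by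
    intro h'; apply hσ0; simp [Prod.ext_iff] at h'; omega
  -- step from a vertically adjacent occupied site
  have hstep : ∀ y ∈ Set.Icc c d, ∀ w : Site, w ∈ ggN → w.1 = 0 →
      ((e, y) : Site) + w ∈ ggClosure A → ((e, y) : Site) ∈ ggClosure A := by
    intro y hyI w hw hw0 hmem
    obtain ⟨hs1, hs2⟩ := hnbr y hyI
    refine closure_step A (e, y) (σ,0) (2*σ,0) w hg1 hg2 hw hd1 ?_ ?_ hs1 hs2 hmem
    · intro h'; exact hσ0 (by rw [← h'] at hw0; simpa using hw0)
    · intro h'; apply hσ0; rw [← h'] at hw0; simpa using hw0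
  have hbase : ((e, y₀) : Site) ∈ ggClosure A := by
    rcases hcase with h | h
    · exact subset_ggClosure A h
    · obtain ⟨hs1, hs2⟩ := hnbr y₀ hy₀
      refine closure_step A (e, y₀) (σ,0) (2*σ,0) (-σ,0) hg1 hg2 hg3 hd1 ?_ ?_ hs1 hs2 ?_
      · intro h'; apply hσ0; simp [Prod.ext_iff] at h'; omega
      · intro h'; apply hσ0; simp [Prod.ext_iff] at h'; omega
      · refine subset_ggClosure A ?_
        have he : ((e, y₀) : Site) + (-σ, 0) = (e - σ, y₀) := by
          simp [Prod.ext_iff]; ring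
        rw [he]; exact h
  have hup : ∀ k : ℕ, y₀ + k ≤ d → ((e, y₀ + k) : Site) ∈ ggClosure A := by
    intro k
    induction k with
    | zero => intro _; simpa using hbase
    | succ k ih =>
      intro hk
      have hk' : y₀ + (k : ℤ) ≤ d := by push_cast at hk ⊢; omega
      have hIk : (y₀ + ((k+1 : ℕ) : ℤ)) ∈ Set.Icc c d := by
        refine ⟨?_, hk⟩
        have := hy₀.1; push_cast; omega
      refine hstep _ hIk (0, -1) hvert2 rfl ?_
      have he : ((e, y₀ + ((k+1 : ℕ) : ℤ)) : Site) + (0, -1) = (e, y₀ + (k : ℕ)) := by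
        simp [Prod.ext_iff]; push_cast; ring
      rw [he]; exact ih hk'
  have hdown : ∀ k : ℕ, c ≤ y₀ - k → ((e, y₀ - k) : Site) ∈ ggClosure A := by
    intro k
    induction k with
    | zero => intro _; simpa using hbase
    | succ k ih =>
      intro hk
      have hk' : c ≤ y₀ - (k : ℤ) := by push_cast at hk ⊢; omega
      have hIk : (y₀ - ((k+1 : ℕ) : ℤ)) ∈ Set.Icc c d := by
        refine ⟨hk, ?_⟩
        have := hy₀.2; push_cast; omega
      refine hstep _ hIk (0, 1) hvert1 rfl ?_
      have he : ((e, y₀ - ((k+1 : ℕ) : ℤ)) : Site) + (0, 1) = (e, y₀ - (k : ℕ)) := by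
        simp [Prod.ext_iff]; push_cast; ring
      rw [he]; exact ih hk'
  intro y hyI
  obtain ⟨hyc, hyd⟩ := hyI
  obtain ⟨hy₀c, hy₀d⟩ := hy₀
  rcases le_total y₀ y with h | h
  · have : y = y₀ + ((y - y₀).toNat : ℤ) := by omega
    rw [this]
    exact hup _ (by omega)
  · have : y = y₀ - ((y₀ - y).toNat : ℤ) := by omega
    rw [this]
    exact hdown _ (by omega)

theorem gg_horizontal_growth (a b c d : ℤ) (hab : 1 ≤ b - a) (hcd : c ≤ d)
    (A : Set Site) (hR : Set.Icc a b ×ˢ Set.Icc c d ⊆ A) :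
    ((∃ y ∈ Set.Icc c d, ((b+1, y) : Site) ∈ A ∨ ((b+2, y) : Site) ∈ A) →
        ({b+1} : Set ℤ) ×ˢ Set.Icc c d ⊆ ggClosure A) ∧
    ((∃ y ∈ Set.Icc c d, ((a-1, y) : Site) ∈ A ∨ ((a-2, y) : Site) ∈ A) →
        ({a-1} : Set ℤ) ×ˢ Set.Icc c d ⊆ ggClosure A) := by
  constructor
  · rintro ⟨y, hyI, hy⟩ ⟨p, q⟩ ⟨hp, hq⟩
    simp only [Set.mem_singleton_iff] at hp
    subst hp
    have htrig : ((b+1, y) : Site) ∈ A ∨ ((b + 1 - (-1), y) : Site) ∈ A := by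
      have he : b + 1 - (-1) = b + 2 := by ring
      rw [he]; exact hy
    have := grow A (b+1) c d (-1) (Or.inr rfl) hcd
      (fun z hz => ⟨hR ⟨by constructor <;> omega, hz⟩, hR ⟨by constructor <;> omega, hz⟩⟩)
      ⟨y, hyI, htrig⟩
    exact this q hq
  · rintro ⟨y, hyI, hy⟩ ⟨p, q⟩ ⟨hp, hq⟩
    simp only [Set.mem_singleton_iff] at hp
    subst hp
    have htrig : ((a-1, y) : Site) ∈ A ∨ ((a - 1 - 1, y) : Site) ∈ A := by
      have he : a - 1 - 1 = a - 2 := by ring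
      rw [he]; exact hy
    have := grow A (a-1) c d 1 (Or.inl rfl) hcd
      (fun z hz => ⟨hR ⟨by constructor <;> omega, hz⟩, hR ⟨by constructor <;> omega, hz⟩⟩)
      ⟨y, hyI, htrig⟩
    exact this q hq
end

section
/- Widening of a critical droplet: let L ≥ 1 and m ≥ 1 be integers, let D = ({0,1} × [0,L−1]) ∩ ℤ² be a fully occupied 2 × L double segment, and let the initial set be A₀ = D ∪ Π(p). Then the ℙ_p-probability that ⟨A₀⟩ contains the widened rectangle ([−m, 1+m] × [0,L−1]) ∩ ℤ² is at least (1 − (1−p)^L)^{2m}. -/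
open MeasureTheory Set

lemma img_finite (x : Site) : ((x + ·) '' ggN).Finite := ggN_finite.image _

lemma ggT_mono : Monotone ggT := by
  intro A B h x hx
  rcases hx with h1 | h1
  · exact Or.inl (h h1)
  · right
    exact le_trans h1 (Set.ncard_le_ncard (Set.inter_subset_inter Set.Subset.rfl h)
      ((img_finite x).inter_of_left B))

lemma subset_ggT (A : Set Site) : A ⊆ ggT A := Set.subset_union_left

lemma iterate_le {A : Set Site} {m n : ℕ} (h : m ≤ n) : ggT^[m] A ⊆ ggT^[n] A := by
  obtain ⟨k, rfl⟩ := Nat.exists_eq_add_of_le h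
  induction k with
  | zero => simp
  | succ j ih =>
    have : ggT^[m + (j+1)] A = ggT (ggT^[m+j] A) := by
      rw [← Nat.add_assoc, Function.iterate_succ_apply']
    rw [this]
    exact (ih (by omega)).trans (subset_ggT _)

lemma mem_closure_of_three {A : Set Site} {x : Site} {a b c : Site}
    (hab : a ≠ b) (hac : a ≠ c) (hbc : b ≠ c)
    (haN : a ∈ (x + ·) '' ggN) (hbN : b ∈ (x + ·) '' ggN) (hcN : c ∈ (x + ·) '' ggN)
    (ha : a ∈ ggClosure A) (hb : b ∈ ggClosure A) (hc : c ∈ ggClosure A) :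
    x ∈ ggClosure A := by
  obtain ⟨na, hna⟩ := Set.mem_iUnion.mp ha
  obtain ⟨nb, hnb⟩ := Set.mem_iUnion.mp hb
  obtain ⟨nc, hnc⟩ := Set.mem_iUnion.mp hc
  set n := max na (max nb nc) with hn
  have ha' : a ∈ ggT^[n] A := iterate_le (le_max_left _ _) hna
  have hb' : b ∈ ggT^[n] A := iterate_le (le_trans (le_max_left _ _) (le_max_right _ _)) hnb
  have hc' : c ∈ ggT^[n] A := iterate_le (le_trans (le_max_right _ _) (le_max_right _ _)) hnc
  have hsub : ({a, b, c} : Set Site) ⊆ ((x + ·) '' ggN) ∩ ggT^[n] A := by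
    rintro z (rfl | rfl | rfl)
    · exact ⟨haN, ha'⟩
    · exact ⟨hbN, hb'⟩
    · exact ⟨hcN, hc'⟩
  have h3 : 3 ≤ (((x + ·) '' ggN) ∩ ggT^[n] A).ncard := by
    have : ({a,b,c} : Set Site).ncard = 3 := Set.ncard_eq_three.mpr ⟨a, b, c, hab, hac, hbc, rfl⟩
    rw [← this]
    exact Set.ncard_le_ncard hsub ((img_finite x).inter_of_left _)
  have hx : x ∈ ggT (ggT^[n] A) := Or.inr h3
  exact Set.mem_iUnion.mpr ⟨n+1, by rw [Function.iterate_succ_apply']; exact hx⟩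

def Filled (A : Set Site) (Lr : ℤ) (c : ℤ) : Prop :=
  ∀ y : ℤ, 0 ≤ y → y ≤ Lr → ((c, y) : Site) ∈ ggClosure A

lemma fill_column {A : Set Site} {Lr : ℤ} {d s : ℤ} (hs : s = 1 ∨ s = -1)
    (h1 : Filled A Lr (d + s)) (h2 : Filled A Lr (d + 2*s))
    {y₀ : ℤ} (hy0 : 0 ≤ y₀) (hy0' : y₀ ≤ Lr) (hseed : ((d, y₀) : Site) ∈ ggClosure A) :
    Filled A Lr d := by
  have hs0 : s ≠ 0 := by rcases hs with rfl | rfl <;> decide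
  have hsN : ((s, 0) : Site) ∈ ggN := by rcases hs with rfl | rfl <;> simp [ggN]
  have h2sN : ((2*s, 0) : Site) ∈ ggN := by rcases hs with rfl | rfl <;> simp [ggN]
  have key : ∀ y : ℤ, ((d, y) : Site) ∈ ggClosure A →
      ∀ t : ℤ, (t = 1 ∨ t = -1) → 0 ≤ y + t → y + t ≤ Lr →
      ((d, y + t) : Site) ∈ ggClosure A := by
    intro y hmem t ht h0 h1'
    have htN : ((0, -t) : Site) ∈ ggN := by rcases ht with rfl | rfl <;> simp [ggN]
    refine mem_closure_of_three (x := ((d, y + t) : Site))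
      (a := ((d, y+t) : Site) + (s, 0)) (b := ((d, y+t) : Site) + (2*s, 0))
      (c := ((d, y+t) : Site) + (0, -t)) ?_ ?_ ?_
      ⟨(s,0), hsN, rfl⟩ ⟨(2*s,0), h2sN, rfl⟩ ⟨(0,-t), htN, rfl⟩ ?_ ?_ ?_
    · simp only [ne_eq, add_right_inj, Prod.mk.injEq]
      intro h; exact absurd h.1 (by omega)
    · simp only [ne_eq, add_right_inj, Prod.mk.injEq]
      rintro ⟨-, h2⟩; omega
    · simp only [ne_eq, add_right_inj, Prod.mk.injEq]
      rintro ⟨-, h2⟩; omega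
    · have : ((d, y+t) : Site) + (s, 0) = ((d + s, y + t) : Site) := by
        simp [Prod.ext_iff]
      rw [this]; exact h1 _ h0 h1'
    · have : ((d, y+t) : Site) + (2*s, 0) = ((d + 2*s, y + t) : Site) := by
        simp [Prod.ext_iff]
      rw [this]; exact h2 _ h0 h1'
    · have : ((d, y+t) : Site) + (0, -t) = ((d, y) : Site) := by
        simp [Prod.ext_iff]
      rw [this]; exact hmem
  have up : ∀ k : ℕ, y₀ + k ≤ Lr → ((d, y₀ + k) : Site) ∈ ggClosure A := by
    intro k
    induction k with
    | zero => intro _; simpa using hseed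
    | succ j ih =>
      intro hk
      have hj : y₀ + j ≤ Lr := by push_cast at hk ⊢; omega
      have := key (y₀ + j) (ih hj) 1 (Or.inl rfl) (by omega) (by push_cast at hk ⊢; omega)
      have he : y₀ + (j : ℤ) + 1 = y₀ + ((j : ℕ) + 1 : ℕ) := by push_cast; ring
      rwa [he] at this
  have down : ∀ k : ℕ, 0 ≤ y₀ - k → ((d, y₀ - k) : Site) ∈ ggClosure A := by
    intro k
    induction k with
    | zero => intro _; simpa using hseed
    | succ j ih =>
      intro hk
      have hj : 0 ≤ y₀ - j := by push_cast at hk ⊢; omega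
      have := key (y₀ - j) (ih hj) (-1) (Or.inr rfl) (by push_cast at hk ⊢; omega)
        (by push_cast at hk ⊢; omega)
      have he : y₀ - (j : ℤ) + -1 = y₀ - ((j : ℕ) + 1 : ℕ) := by push_cast; ring
      rwa [he] at this
  intro y hy hy'
  rcases le_or_gt y₀ y with h | h
  · have := up (y - y₀).toNat (by omega)
    have he : y₀ + ((y - y₀).toNat : ℤ) = y := by omega
    rwa [he] at this
  · have := down (y₀ - y).toNat (by omega)
    have he : y₀ - ((y₀ - y).toNat : ℤ) = y := by omega
    rwa [he] at this

lemma det_widening (L m : ℕ) (hL : 1 ≤ L) (A : Set Site)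
    (hD : (({0,1} : Set ℤ) ×ˢ Set.Icc (0:ℤ) ((L:ℤ)-1)) ⊆ A)
    (hseed : ∀ c : ℤ, ((2 ≤ c ∧ c ≤ 1 + (m:ℤ)) ∨ (-(m:ℤ) ≤ c ∧ c ≤ -1)) →
      ∃ y : ℤ, 0 ≤ y ∧ y ≤ (L:ℤ)-1 ∧ ((c, y) : Site) ∈ A) :
    (Set.Icc (-(m:ℤ)) (1+(m:ℤ)) ×ˢ Set.Icc (0:ℤ) ((L:ℤ)-1)) ⊆ ggClosure A := by
  set Lr : ℤ := (L:ℤ) - 1 with hLr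
  have hF0 : Filled A Lr 0 := fun y hy hy' =>
    subset_ggClosure A (hD ⟨by simp, by simp [hLr] at hy' ⊢; exact ⟨hy, hy'⟩⟩)
  have hF1 : Filled A Lr 1 := fun y hy hy' =>
    subset_ggClosure A (hD ⟨by simp, by simp [hLr] at hy' ⊢; exact ⟨hy, hy'⟩⟩)
  have seedC : ∀ c : ℤ, ((2 ≤ c ∧ c ≤ 1 + (m:ℤ)) ∨ (-(m:ℤ) ≤ c ∧ c ≤ -1)) →
      ∃ y : ℤ, 0 ≤ y ∧ y ≤ Lr ∧ ((c, y) : Site) ∈ ggClosure A := by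
    intro c hc
    obtain ⟨y, h1, h2, h3⟩ := hseed c hc
    exact ⟨y, h1, h2, subset_ggClosure A h3⟩
  have right : ∀ k : ℕ, k ≤ m → Filled A Lr (k : ℤ) ∧ Filled A Lr ((k : ℤ) + 1) := by
    intro k
    induction k with
    | zero => intro _; exact ⟨hF0, by simpa using hF1⟩
    | succ j ih =>
      intro hk
      obtain ⟨hja, hjb⟩ := ih (by omega)
      obtain ⟨y, hy1, hy2, hy3⟩ := seedC ((j:ℤ) + 2) (Or.inl ⟨by omega, by push_cast; omega⟩)
      have hfill : Filled A Lr ((j:ℤ) + 2) := by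
        refine fill_column (Or.inr rfl) ?_ ?_ hy1 hy2 hy3
        · have : (j:ℤ) + 2 + (-1) = (j:ℤ) + 1 := by ring
          rwa [this]
        · have : (j:ℤ) + 2 + 2*(-1) = (j:ℤ) := by ring
          rwa [this]
      constructor
      · have he : ((j+1 : ℕ) : ℤ) = (j:ℤ) + 1 := by push_cast; ring
        rwa [he]
      · have he : ((j+1 : ℕ) : ℤ) + 1 = (j:ℤ) + 2 := by push_cast; ring
        rwa [he]
  have left : ∀ k : ℕ, k ≤ m → Filled A Lr (-(k:ℤ)) ∧ Filled A Lr (1 - (k:ℤ)) := by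
    intro k
    induction k with
    | zero => intro _; exact ⟨by simpa using hF0, by simpa using hF1⟩
    | succ j ih =>
      intro hk
      obtain ⟨hja, hjb⟩ := ih (by omega)
      obtain ⟨y, hy1, hy2, hy3⟩ := seedC (-(j:ℤ) - 1) (Or.inr ⟨by push_cast; omega, by omega⟩)
      have hfill : Filled A Lr (-(j:ℤ) - 1) := by
        refine fill_column (Or.inl rfl) ?_ ?_ hy1 hy2 hy3
        · have : -(j:ℤ) - 1 + 1 = -(j:ℤ) := by ring
          rwa [this]
        · have : -(j:ℤ) - 1 + 2*1 = 1 - (j:ℤ) := by ring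
          rwa [this]
      constructor
      · have he : -((j+1 : ℕ) : ℤ) = -(j:ℤ) - 1 := by push_cast; ring
        rwa [he]
      · have he : (1 : ℤ) - ((j+1 : ℕ) : ℤ) = -(j:ℤ) := by push_cast; ring
        rwa [he]
  rintro ⟨x, y⟩ ⟨hx, hy⟩
  simp only [Set.mem_Icc] at hx hy
  rcases le_or_gt 1 x with h | h
  · have hk : (x - 1).toNat ≤ m := by omega
    have := (right _ hk).2
    have he : (((x-1).toNat : ℤ)) + 1 = x := by omega
    rw [he] at this
    exact this y hy.1 hy.2
  · have hk : (-x).toNat ≤ m := by omega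
    have := (left _ hk).1
    have he : -(((-x).toNat : ℤ)) = x := by omega
    rw [he] at this
    exact this y hy.1 hy.2

section Prob
variable (L : ℕ)

noncomputable def ggRows (L : ℕ) : Finset ℤ := Finset.Icc 0 ((L:ℤ)-1)

noncomputable def colS (L : ℕ) (c : ℤ) : Finset Site := ({c} : Finset ℤ) ×ˢ ggRows L

def Ecol (L : ℕ) (c : ℤ) : Set Config := {ω | ∃ y ∈ ggRows L, ω (c, y) = true}

lemma rows_card (hL : 1 ≤ L) : (ggRows L).card = L := by
  simp only [ggRows, Int.card_Icc]
  omega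

lemma meas_Ecol (c : ℤ) : MeasurableSet (Ecol L c) := by
  have h : Ecol L c = ⋃ y ∈ ggRows L, (fun ω : Config => ω (c, y)) ⁻¹' {true} := by
    ext ω; simp [Ecol]
  rw [h]
  exact (ggRows L).measurableSet_biUnion
    (fun y _ => (measurable_pi_apply ((c,y) : Site)) (measurableSet_singleton true))

variable {p : ℝ} {μ : Measure Config}

lemma prob_false (hμ : IsBernoulli p μ) (hp0 : 0 ≤ p) (hp1 : p ≤ 1) (x : Site) :
    μ {ω | ω x = false} = ENNReal.ofReal (1 - p) := by
  haveI := hμ.1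
  have h1 : {ω : Config | ω x = false} = {ω : Config | ω x = true}ᶜ := by
    ext ω; simp
  have hm : MeasurableSet {ω : Config | ω x = true} := by
    have he : {ω : Config | ω x = true} = (fun ω : Config => ω x) ⁻¹' {true} := rfl
    rw [he]
    exact (measurable_pi_apply x) (measurableSet_singleton true)
  rw [h1, measure_compl hm (measure_ne_top _ _), measure_univ, hμ.2.2 x,
    ENNReal.ofReal_sub _ hp0, ENNReal.ofReal_one]

lemma prob_Ecol (hμ : IsBernoulli p μ) (hL : 1 ≤ L) (hp0 : 0 ≤ p) (hp1 : p ≤ 1) (c : ℤ) :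
    μ (Ecol L c) = ENNReal.ofReal (1 - (1-p)^L) := by
  haveI := hμ.1
  have hcompl : (Ecol L c)ᶜ = ⋂ x ∈ colS L c, {ω : Config | ω x = false} := by
    ext ω
    simp only [Ecol, mem_compl_iff, mem_setOf_eq, not_exists, not_and,
      Bool.not_eq_true, Set.mem_iInter]
    constructor
    · rintro h ⟨a, b⟩ hab
      simp only [colS, Finset.mem_product, Finset.mem_singleton] at hab
      obtain ⟨rfl, hb⟩ := hab
      exact h b hb
    · intro h y hy
      exact h (c, y) (by simp [colS, ggRows] at hy ⊢; omega)
  have hprod : μ ((Ecol L c)ᶜ) = ENNReal.ofReal ((1-p)^L) := by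
    have hbi := hμ.2.1.meas_biInter (S := colS L c)
      (s := fun x => {ω : Config | ω x = false})
      (fun x _ => ⟨{false}, trivial, by ext ω; simp⟩)
    rw [hcompl, hbi]
    rw [Finset.prod_congr rfl (fun x _ => prob_false hμ hp0 hp1 x), Finset.prod_const]
    have hcard : (colS L c).card = L := by
      simp [colS, rows_card L hL]
    rw [hcard, ← ENNReal.ofReal_pow (by linarith)]
  have := measure_compl (meas_Ecol L c).compl (measure_ne_top μ _)
  rw [compl_compl, measure_univ, hprod] at this
  rw [this]
  have hle1 : (1-p)^L ≤ 1 := pow_le_one₀ (by linarith) (by linarith)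
  rw [← ENNReal.ofReal_one, ← ENNReal.ofReal_sub _ (pow_nonneg (by linarith) L)]

lemma prob_iInter (hμ : IsBernoulli p μ) (hp0 : 0 ≤ p) (hp1 : p ≤ 1) (S : Finset ℤ) :
    μ (⋂ c ∈ S, Ecol L c) = ∏ c ∈ S, μ (Ecol L c) := by
  classical
  haveI := hμ.1
  induction S using Finset.induction_on with
  | empty => simp
  | @insert a S ha ih =>
    rw [Finset.prod_insert ha, ← ih]
    have hbi : ⋂ c ∈ insert a S, Ecol L c = Ecol L a ∩ ⋂ c ∈ S, Ecol L c := by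
      simp [Set.biInter_insert]
    rw [hbi]
    set T : Finset Site := S.biUnion (colS L) with hT
    have hdisj : Disjoint (colS L a) T := by
      rw [Finset.disjoint_left]
      rintro ⟨x1, x2⟩ hx hxT
      simp only [colS, Finset.mem_product, Finset.mem_singleton] at hx
      obtain ⟨c, hc, hxc⟩ := Finset.mem_biUnion.mp hxT
      simp only [colS, Finset.mem_product, Finset.mem_singleton] at hxc
      exact ha (hx.1 ▸ hxc.1 ▸ hc)
    have hind := hμ.2.1.indepFun_finset (colS L a) T hdisj (fun x => measurable_pi_apply x)
    set X : Config → (colS L a → Bool) := fun ω i => ω i with hX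
    set Y : Config → (T → Bool) := fun ω i => ω i with hY
    have hXs : X ⁻¹' {v : colS L a → Bool | ∃ i, v i = true} = Ecol L a := by
      ext ω
      simp only [mem_preimage, mem_setOf_eq, Ecol, hX]
      constructor
      · rintro ⟨⟨⟨i1, i2⟩, hi⟩, hv⟩
        simp only [colS, Finset.mem_product, Finset.mem_singleton] at hi
        exact ⟨i2, hi.2, by rwa [← hi.1]⟩
      · rintro ⟨y, hy, hv⟩
        refine ⟨⟨(a, y), ?_⟩, hv⟩
        simp [colS, hy]
    have hYt : Y ⁻¹' {v : T → Bool | ∀ c ∈ S, ∃ i : T, (i : Site).1 = c ∧ v i = true}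
        = ⋂ c ∈ S, Ecol L c := by
      ext ω
      simp only [mem_preimage, mem_setOf_eq, Set.mem_iInter, Ecol, hY]
      constructor
      · intro h c hc
        obtain ⟨⟨⟨i1, i2⟩, hi⟩, h1, h2⟩ := h c hc
        obtain ⟨c', hc', hic⟩ := Finset.mem_biUnion.mp hi
        simp only [colS, Finset.mem_product, Finset.mem_singleton] at hic
        simp only at h1
        refine ⟨i2, hic.2, ?_⟩
        rwa [← h1]
      · intro h c hc
        obtain ⟨y, hy, hv⟩ := h c hc
        refine ⟨⟨(c, y), Finset.mem_biUnion.mpr ⟨c, hc, ?_⟩⟩, rfl, hv⟩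
        simp [colS, hy]
    have hmBs : MeasurableSet {v : colS L a → Bool | ∃ i, v i = true} :=
      (Set.toFinite _).measurableSet
    have hmBt : MeasurableSet {v : T → Bool | ∀ c ∈ S, ∃ i : T, (i : Site).1 = c ∧ v i = true} :=
      (Set.toFinite _).measurableSet
    have := hind.measure_inter_preimage_eq_mul _ _ hmBs hmBt
    rw [hXs, hYt] at this
    exact this

end Prob

theorem gg_droplet_widening (p : ℝ) (hp : p ∈ Set.Ioo (0:ℝ) 1)
    (L m : ℕ) (hL : 1 ≤ L) (hm : 1 ≤ m)
    (μ : Measure Config) (hμ : IsBernoulli p μ) :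
    ENNReal.ofReal ((1 - (1-p)^L)^(2*m)) ≤
      μ {ω | (Set.Icc (-(m:ℤ)) (1+(m:ℤ)) ×ˢ Set.Icc (0:ℤ) ((L:ℤ)-1)) ⊆
          ggClosure ((({0,1} : Set ℤ) ×ˢ Set.Icc (0:ℤ) ((L:ℤ)-1)) ∪ occupied ω)} := by
  obtain ⟨hp0, hp1⟩ := hp
  classical
  set cols : Finset ℤ := Finset.Icc (2:ℤ) (1+(m:ℤ)) ∪ Finset.Icc (-(m:ℤ)) (-1) with hcols
  have hcard : cols.card = 2 * m := by
    rw [hcols, Finset.card_union_of_disjoint]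
    · simp only [Int.card_Icc]
      omega
    · rw [Finset.disjoint_left]
      intro a ha hb
      simp only [Finset.mem_Icc] at ha hb
      omega
  have hsub : (⋂ c ∈ cols, Ecol L c) ⊆
      {ω : Config | (Set.Icc (-(m:ℤ)) (1+(m:ℤ)) ×ˢ Set.Icc (0:ℤ) ((L:ℤ)-1)) ⊆
        ggClosure ((({0,1} : Set ℤ) ×ˢ Set.Icc (0:ℤ) ((L:ℤ)-1)) ∪ occupied ω)} := by
    intro ω hω
    have hω' : ∀ c ∈ cols, ∃ y ∈ ggRows L, ω (c, y) = true := by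
      intro c hc
      exact (Set.mem_iInter.mp (Set.mem_iInter.mp hω c) hc)
    refine det_widening L m hL _ Set.subset_union_left ?_
    intro c hc
    have hccols : c ∈ cols := by
      rw [hcols, Finset.mem_union, Finset.mem_Icc, Finset.mem_Icc]
      rcases hc with ⟨h1, h2⟩ | ⟨h1, h2⟩
      · exact Or.inl ⟨h1, h2⟩
      · exact Or.inr ⟨h1, h2⟩
    obtain ⟨y, hy, hωy⟩ := hω' c hccols
    simp only [ggRows, Finset.mem_Icc] at hy
    exact ⟨y, hy.1, hy.2, Or.inr hωy⟩
  calc ENNReal.ofReal ((1 - (1-p)^L)^(2*m))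
      = (ENNReal.ofReal (1 - (1-p)^L))^(2*m) := by
        rw [ENNReal.ofReal_pow]
        have : (1-p)^L ≤ 1 := pow_le_one₀ (by linarith) (by linarith)
        linarith
    _ = ∏ c ∈ cols, μ (Ecol L c) := by
        rw [Finset.prod_congr rfl (fun c _ => prob_Ecol L hμ hL hp0.le hp1.le c),
          Finset.prod_const, hcard]
    _ = μ (⋂ c ∈ cols, Ecol L c) := (prob_iInter L hμ hp0.le hp1.le cols).symm
    _ ≤ _ := measure_mono hsub
end

section
/- Analytic inequality for the vertical-line factor: for every C₂ > 0 and every c with 0 < c < C₂/2 there exists p₀ > 0 such that for all 0 < p < p₀, (1 − (1−p²)^{p^{−3/2}})^{(C₂/p)·log(1/p)} ≤ exp(−c · (1/p) · (log(1/p))²). -/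
open MeasureTheory Set

set_option maxHeartbeats 1000000 in
theorem gg_vertical_factor_bound (C₂ : ℝ) (hC₂ : 0 < C₂) (c : ℝ) (hc : 0 < c)
    (hcC : c < C₂/2) :
    ∃ p₀ : ℝ, 0 < p₀ ∧ ∀ p : ℝ, 0 < p → p < p₀ →
      (1 - (1-p^2) ^ (p ^ (-(3:ℝ)/2))) ^ ((C₂/p) * Real.log (1/p)) ≤
        Real.exp (-(c * (1/p) * (Real.log (1/p))^2)) := by
  have hd : 0 < C₂/2 - c := by linarith
  set M : ℝ := C₂ * Real.log 2 / (C₂/2 - c) with hMdef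
  have hM0 : 0 ≤ M := div_nonneg (mul_nonneg hC₂.le (Real.log_nonneg one_le_two)) hd.le
  have hdM : (C₂/2 - c) * M = C₂ * Real.log 2 := by
    rw [hMdef, mul_comm, div_mul_cancel₀ _ hd.ne']
  refine ⟨Real.exp (-(M+1)), Real.exp_pos _, fun p hp hpp₀ => ?_⟩
  have hexp1 : (2.7182818283:ℝ) < Real.exp 1 := Real.exp_one_gt_d9
  have hpe : p < Real.exp (-1) := lt_of_lt_of_le hpp₀ (Real.exp_le_exp.2 (by linarith))
  have hphalf : p < 1/2 := by
    have h1 : Real.exp (-1) = (Real.exp 1)⁻¹ := by rw [Real.exp_neg]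
    have h2 : (Real.exp 1)⁻¹ < 1/2 := by
      rw [inv_lt_comm₀ (by positivity) (by norm_num)]
      linarith
    linarith [h1 ▸ hpe]
  have hp1 : p < 1 := by linarith
  have hlogp : Real.log p < -(M+1) := by
    have := Real.log_lt_log hp hpp₀
    rwa [Real.log_exp] at this
  set t : ℝ := Real.log (1/p) with htdef
  have ht : t = -Real.log p := by rw [htdef, one_div, Real.log_inv]
  have htM : M + 1 ≤ t := by rw [ht]; linarith
  have ht0 : 0 < t := by linarith
  have hp2 : 0 < 1 - p^2 := by nlinarith
  have hp2half : p^2 ≤ 1/2 := by nlinarith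
  -- q bounds
  set q : ℝ := (1-p^2) ^ (p ^ (-(3:ℝ)/2)) with hqdef
  have hq1 : q ≤ 1 := Real.rpow_le_one hp2.le (by nlinarith) (Real.rpow_nonneg hp.le _)
  -- lower bound on q
  have hsq : (0:ℝ) < p ^ ((1:ℝ)/2) := Real.rpow_pos_of_pos hp _
  have hlog1p2 : -(2 * p^2) ≤ Real.log (1 - p^2) := by
    rw [Real.le_log_iff_exp_le hp2]
    have h1 : Real.exp (2*p^2) * Real.exp (-(2*p^2)) = 1 := by
      rw [← Real.exp_add]; simp
    have h2 : 1 + 2*p^2 ≤ Real.exp (2*p^2) := by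
      have := Real.add_one_le_exp (2*p^2); linarith
    have h3 : Real.exp (-(2*p^2)) ≤ 1 / (1 + 2*p^2) := by
      rw [le_div_iff₀ (by positivity)]
      calc Real.exp (-(2*p^2)) * (1 + 2*p^2)
          ≤ Real.exp (-(2*p^2)) * Real.exp (2*p^2) := by
            exact mul_le_mul_of_nonneg_left h2 (Real.exp_pos _).le
        _ = 1 := by rw [← Real.exp_add]; simp
    have h4 : 1 / (1 + 2*p^2) ≤ 1 - p^2 := by
      rw [div_le_iff₀ (by positivity)]
      nlinarith
    linarith
  have hqge : 1 - 2 * p ^ ((1:ℝ)/2) ≤ q := by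
    have hrw : q = Real.exp (p ^ (-(3:ℝ)/2) * Real.log (1-p^2)) := by
      rw [hqdef, Real.rpow_def_of_pos hp2, mul_comm]
    have hpow : p ^ (-(3:ℝ)/2) * p^2 = p ^ ((1:ℝ)/2) := by
      have : (p:ℝ)^2 = p ^ ((2:ℝ)) := by
        rw [← Real.rpow_natCast p 2]; norm_num
      rw [this, ← Real.rpow_add hp]; norm_num
    have hexpo : -(2 * p ^ ((1:ℝ)/2)) ≤ p ^ (-(3:ℝ)/2) * Real.log (1-p^2) := by
      have h5 : p ^ (-(3:ℝ)/2) * (-(2*p^2)) ≤ p ^ (-(3:ℝ)/2) * Real.log (1-p^2) :=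
        mul_le_mul_of_nonneg_left hlog1p2 (Real.rpow_nonneg hp.le _)
      calc -(2 * p ^ ((1:ℝ)/2)) = p ^ (-(3:ℝ)/2) * (-(2*p^2)) := by
            rw [show p ^ (-(3:ℝ)/2) * (-(2*p^2)) = -(2 * (p ^ (-(3:ℝ)/2) * p^2)) by ring, hpow]
        _ ≤ _ := h5
    calc 1 - 2 * p ^ ((1:ℝ)/2) = (-(2 * p ^ ((1:ℝ)/2))) + 1 := by ring
      _ ≤ Real.exp (-(2 * p ^ ((1:ℝ)/2))) := Real.add_one_le_exp _
      _ ≤ Real.exp (p ^ (-(3:ℝ)/2) * Real.log (1-p^2)) := Real.exp_le_exp.2 hexpo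
      _ = q := hrw.symm
  have hbase : 1 - q ≤ 2 * p ^ ((1:ℝ)/2) := by linarith
  have hbase0 : 0 ≤ 1 - q := by linarith
  set l : ℝ := (C₂/p) * t with hldef
  have hl0 : 0 ≤ l := by positivity
  have step1 : (1 - q) ^ l ≤ (2 * p ^ ((1:ℝ)/2)) ^ l :=
    Real.rpow_le_rpow hbase0 hbase hl0
  have step2 : (2 * p ^ ((1:ℝ)/2)) ^ l = Real.exp (l * (Real.log 2 + (1/2) * Real.log p)) := by
    rw [Real.rpow_def_of_pos (by positivity), Real.log_mul (by norm_num) (ne_of_gt hsq),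
      Real.log_rpow hp]
    ring_nf
  have h1 : C₂ * Real.log 2 ≤ (C₂/2 - c) * t := by
    have := mul_le_mul_of_nonneg_left htM hd.le
    nlinarith
  have h2 : C₂ * Real.log 2 * t ≤ (C₂/2 - c) * t * t :=
    mul_le_mul_of_nonneg_right h1 ht0.le
  have key : C₂ * t * (Real.log 2 - t/2) ≤ -(c * t^2) := by nlinarith [h2]
  have step3 : l * (Real.log 2 + (1/2) * Real.log p) ≤ -(c * (1/p) * t^2) := by
    have hc1 : l * (Real.log 2 + (1/2) * Real.log p)
        = (C₂ * t * (Real.log 2 - t/2)) * (1/p) := by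
      rw [hldef, ht]; ring
    have hc2 : -(c * (1/p) * t^2) = (-(c * t^2)) * (1/p) := by ring
    rw [hc1, hc2]
    exact mul_le_mul_of_nonneg_right key (by positivity)
  calc (1 - q) ^ l ≤ (2 * p ^ ((1:ℝ)/2)) ^ l := step1
    _ = Real.exp (l * (Real.log 2 + (1/2) * Real.log p)) := step2
    _ ≤ Real.exp (-(c * (1/p) * t^2)) := Real.exp_le_exp.2 step3
end
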